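/- Under Assumption (A), for every 0 ≤ t < T and x ∈ ℝ^d, the optimal drift u*_λ(t,x) = 2β ∇_x log h_λ(t,x) admits the averaged-gradient representation u*_λ(t,x) = −(T/λ) ∫_{ℝ^d} ∇f(y) η_{λ,t,x}(y) dy, where η_{λ,t,x}(y) = G_{T−t}(x−y) π_λ(y)/h_λ(t,x). -/

import Mathlib

open MeasureTheory Real Filter Topology
open scoped RealInnerProductSpace

noncomputable section

/-- The heat kernel with diffusivity `β`: `G_r(z) = (4πβr)^(−d/2) exp(−‖z‖²/(4βr))`. -/
def heatK {d : ℕ} (β r : ℝ) (z : EuclideanSpace ℝ (Fin d)) : ℝ :=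
  (4 * π * β * r) ^ (-(d : ℝ) / 2) * Real.exp (-‖z‖ ^ 2 / (4 * β * r))

/-- The Laplacian of a scalar function on `ℝ^d`. -/
def lap {d : ℕ} (g : EuclideanSpace ℝ (Fin d) → ℝ) (x : EuclideanSpace ℝ (Fin d)) : ℝ :=
  ∑ i : Fin d,
    fderiv ℝ (fun z => fderiv ℝ g z (EuclideanSpace.single i 1)) x (EuclideanSpace.single i 1)

/-- The normalized Gibbs density `π_λ(y) = e^{−α_λ f(y)} / M_λ`, with `α_λ = T/(2λβ)`. -/
def gibbsDen {d : ℕ} (T β lam : ℝ) (f : EuclideanSpace ℝ (Fin d) → ℝ)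
    (y : EuclideanSpace ℝ (Fin d)) : ℝ :=
  Real.exp (-(T / (2 * lam * β)) * f y) / ∫ z, Real.exp (-(T / (2 * lam * β)) * f z)

/-- `h_λ(t,x) = ∫ G_{T−t}(x−y) π_λ(y) dy`. -/
def hHC {d : ℕ} (T β lam : ℝ) (f : EuclideanSpace ℝ (Fin d) → ℝ) (t : ℝ)
    (x : EuclideanSpace ℝ (Fin d)) : ℝ :=
  ∫ y, heatK β (T - t) (x - y) * gibbsDen T β lam f y

/-- The conditional terminal density `η_{λ,t,x}(y) = G_{T−t}(x−y) π_λ(y) / h_λ(t,x)`. -/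
def etaHC {d : ℕ} (T β lam : ℝ) (f : EuclideanSpace ℝ (Fin d) → ℝ) (t : ℝ)
    (x y : EuclideanSpace ℝ (Fin d)) : ℝ :=
  heatK β (T - t) (x - y) * gibbsDen T β lam f y / hHC T β lam f t x

/-- The barycenter `a_λ(t,x) = ∫ y η_{λ,t,x}(y) dy`. -/
def aHC {d : ℕ} (T β lam : ℝ) (f : EuclideanSpace ℝ (Fin d) → ℝ) (t : ℝ)
    (x : EuclideanSpace ℝ (Fin d)) : EuclideanSpace ℝ (Fin d) :=
  ∫ y, etaHC T β lam f t x y • y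

/-- The optimal drift `u*_λ(t,x) = 2β ∇_x log h_λ(t,x)`. -/
def uHC {d : ℕ} (T β lam : ℝ) (f : EuclideanSpace ℝ (Fin d) → ℝ) (t : ℝ)
    (x : EuclideanSpace ℝ (Fin d)) : EuclideanSpace ℝ (Fin d) :=
  (2 * β) • gradient (fun z => Real.log (hHC T β lam f t z)) x

/-- The potential `Φ_λ(t,x) = −2β log h_λ(t,x)`. -/
def PhiHC {d : ℕ} (T β lam : ℝ) (f : EuclideanSpace ℝ (Fin d) → ℝ) (t : ℝ)
    (x : EuclideanSpace ℝ (Fin d)) : ℝ :=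
  -(2 * β) * Real.log (hHC T β lam f t x)

/-- The value function `V_λ(t,x) = −(2λβ/T) log h_λ(t,x) − (2λβ/T) log M_λ`. -/
def VHC {d : ℕ} (T β lam : ℝ) (f : EuclideanSpace ℝ (Fin d) → ℝ) (t : ℝ)
    (x : EuclideanSpace ℝ (Fin d)) : ℝ :=
  -(2 * lam * β / T) * Real.log (hHC T β lam f t x)
    - (2 * lam * β / T) * Real.log (∫ z, Real.exp (-(T / (2 * lam * β)) * f z))

set_option maxHeartbeats 1000000
set_option synthInstance.maxHeartbeats 400000

lemma mul_exp_le_sqrt {a s : ℝ} (ha : 0 < a) (hs : 0 ≤ s) :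
    s * Real.exp (-s ^ 2 / a) ≤ Real.sqrt a := by
  rw [Real.le_sqrt (by positivity) ha.le]
  have h1 : s ^ 2 / a ≤ Real.exp (s ^ 2 / a) := (Real.add_one_le_exp _).trans' (by nlinarith)
  have h2 : Real.exp (-s ^ 2 / a) ≤ 1 :=
    Real.exp_le_one_iff.2 (div_nonpos_iff.mpr (Or.inr ⟨by nlinarith [sq_nonneg s], ha.le⟩))
  have h3 : Real.exp (-s ^ 2 / a) = (Real.exp (s ^ 2 / a))⁻¹ := by
    rw [← Real.exp_neg]; ring_nf
  have he : 0 < Real.exp (s ^ 2 / a) := Real.exp_pos _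
  calc (s * Real.exp (-s ^ 2 / a)) ^ 2
      = (s ^ 2 * Real.exp (-s ^ 2 / a)) * Real.exp (-s ^ 2 / a) := by ring
    _ ≤ (s ^ 2 * Real.exp (-s ^ 2 / a)) * 1 := by
        apply mul_le_mul_of_nonneg_left h2 (by positivity)
    _ = s ^ 2 * Real.exp (-s ^ 2 / a) := by ring
    _ ≤ a := by
        rw [h3, mul_inv_le_iff₀ he]
        have hx : a * (s ^ 2 / a) = s ^ 2 := by field_simp
        nlinarith [mul_le_mul_of_nonneg_left h1 ha.le]

lemma heatK_hasFDerivAt {d : ℕ} {β r : ℝ} (hβ : 0 < β) (hr : 0 < r)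
    (z : EuclideanSpace ℝ (Fin d)) :
    HasFDerivAt (heatK β r)
      ((-(heatK β r z / (2 * β * r))) • innerSL ℝ z) z := by
  have h1 : HasFDerivAt (fun w : EuclideanSpace ℝ (Fin d) => ‖w‖ ^ 2)
      (2 • innerSL ℝ z) z := by
    simpa using (hasFDerivAt_id z).norm_sq
  have h2 : HasFDerivAt (fun w : EuclideanSpace ℝ (Fin d) => -(4 * β * r)⁻¹ * ‖w‖ ^ 2)
      ((-(4 * β * r)⁻¹) • (2 • innerSL ℝ z)) z := h1.const_mul _
  have h3 := (h2.exp).const_mul ((4 * π * β * r) ^ (-(d : ℝ) / 2))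
  have he : (fun w : EuclideanSpace ℝ (Fin d) =>
      (4 * π * β * r) ^ (-(d : ℝ) / 2) * Real.exp (-(4 * β * r)⁻¹ * ‖w‖ ^ 2)) = heatK β r := by
    funext w; simp only [heatK]; ring_nf
  rw [he] at h3
  refine h3.congr_fderiv ?_
  ext v
  simp only [ContinuousLinearMap.coe_smul', Pi.smul_apply, innerSL_apply_apply, smul_eq_mul, heatK]
  ring_nf

theorem averaged_gradient_form (d : ℕ) (hd : 1 ≤ d) (T β lam : ℝ)
    (hT : 0 < T) (hβ : 0 < β) (hlam : 0 < lam)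
    (f : EuclideanSpace ℝ (Fin d) → ℝ)
    (hf : ContDiff ℝ 2 f)
    (hbdd : BddBelow (Set.range f))
    (hcoer : Tendsto f (cocompact (EuclideanSpace ℝ (Fin d))) atTop)
    (hint : ∀ c > 0,
      Integrable (fun y => Real.exp (-c * f y)) ∧
      Integrable (fun y => ‖gradient f y‖ * Real.exp (-c * f y)) ∧
      Integrable (fun y => ‖iteratedFDeriv ℝ 2 f y‖ * Real.exp (-c * f y))) :
    ∀ t : ℝ, 0 ≤ t → t < T → ∀ x : EuclideanSpace ℝ (Fin d),
      uHC T β lam f t x = -(T / lam) • ∫ y, etaHC T β lam f t x y • gradient f y := by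
  intro t ht htT x
  have hr : 0 < T - t := sub_pos.2 htT
  set α : ℝ := T / (2 * lam * β) with hα
  have hαpos : 0 < α := by positivity
  set g : EuclideanSpace ℝ (Fin d) → ℝ := fun y => Real.exp (-α * f y) with hgdef
  have hf_diff : Differentiable ℝ f := hf.differentiable two_ne_zero
  have hf_cont : Continuous f := hf.continuous
  have hf'_cont : Continuous (fderiv ℝ f) := hf.continuous_fderiv two_ne_zero
  have hg_cont : Continuous g := Real.continuous_exp.comp (continuous_const.mul hf_cont)
  have hg_pos : ∀ y, 0 < g y := fun y => Real.exp_pos _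
  obtain ⟨hg_int, hgrad_int, -⟩ := hint α hαpos
  -- heat kernel constants
  set c : ℝ := (4 * π * β * (T - t)) ^ (-(d : ℝ) / 2) with hcdef
  have hc : 0 < c := Real.rpow_pos_of_pos (by positivity) _
  have hK_pos : ∀ z : EuclideanSpace ℝ (Fin d), 0 < heatK β (T - t) z := fun z => by
    rw [heatK, ← hcdef]; positivity
  have hK_le : ∀ z : EuclideanSpace ℝ (Fin d), heatK β (T - t) z ≤ c := fun z => by
    rw [heatK, ← hcdef]
    exact mul_le_of_le_one_right hc.le
      (Real.exp_le_one_iff.2 (div_nonpos_iff.mpr (Or.inr ⟨by nlinarith [sq_nonneg ‖z‖], by positivity⟩)))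
  have hK_cont : Continuous (heatK (d := d) β (T - t)) := by
    apply continuous_const.mul
    exact Real.continuous_exp.comp (((continuous_norm.pow 2).neg).div_const _)
  set K' : EuclideanSpace ℝ (Fin d) → (EuclideanSpace ℝ (Fin d) →L[ℝ] ℝ) :=
    fun z => (-(heatK β (T - t) z / (2 * β * (T - t)))) • innerSL ℝ z with hK'def
  have hKd : ∀ z, HasFDerivAt (heatK (d := d) β (T - t)) (K' z) z :=
    fun z => heatK_hasFDerivAt hβ hr z
  set Kb : ℝ := c * Real.sqrt (4 * β * (T - t)) / (2 * β * (T - t)) with hKbdef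
  have hK'_le : ∀ z, ‖K' z‖ ≤ Kb := by
    intro z
    have hz : K' z = (-(heatK β (T - t) z / (2 * β * (T - t)))) • innerSL ℝ z := rfl
    rw [hz, norm_smul (-(heatK β (T - t) z / (2 * β * (T - t)))) (innerSL ℝ z), innerSL_apply_norm, Real.norm_eq_abs, abs_neg,
      abs_of_nonneg (div_nonneg (hK_pos z).le (by positivity))]
    rw [heatK, ← hcdef, hKbdef]
    rw [div_mul_eq_mul_div, div_le_div_iff_of_pos_right (by positivity)]
    calc c * Real.exp (-‖z‖ ^ 2 / (4 * β * (T - t))) * ‖z‖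
        = c * (‖z‖ * Real.exp (-‖z‖ ^ 2 / (4 * β * (T - t)))) := by ring
      _ ≤ c * Real.sqrt (4 * β * (T - t)) := by
          apply mul_le_mul_of_nonneg_left _ hc.le
          exact mul_exp_le_sqrt (by positivity) (norm_nonneg z)
  have hK'_cont : Continuous K' := by
    refine Continuous.smul (f := fun z => -(heatK β (T - t) z / (2 * β * (T - t)))) (g := fun z => innerSL ℝ z) ?_ ?_
    · exact ((hK_cont.div_const _).neg)
    · exact (innerSL ℝ).continuous
  -- the unnormalized convolution F
  have hI1 : ∀ z : EuclideanSpace ℝ (Fin d),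
      Integrable (fun y => heatK β (T - t) (z - y) * g y) := by
    intro z
    apply hg_int.bdd_mul (c := c) ((hK_cont.comp (continuous_const.sub continuous_id)).aestronglyMeasurable)
    refine ae_of_all _ fun y => ?_
    simp only [Function.comp_apply, id_eq, Real.norm_eq_abs]
    rw [abs_of_pos (hK_pos _)]
    exact hK_le _
  set F : EuclideanSpace ℝ (Fin d) → ℝ := fun z => ∫ y, heatK β (T - t) (z - y) * g y with hFdef
  have hFpos : ∀ z, 0 < F z := by
    intro z
    rw [hFdef]
    rw [integral_pos_iff_support_of_nonneg
      (fun y => (mul_pos (hK_pos _) (hg_pos _)).le) (hI1 z)]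
    have hsupp : (Function.support fun y => heatK β (T - t) (z - y) * g y) = Set.univ :=
      Set.eq_univ_of_forall fun y => (mul_pos (hK_pos _) (hg_pos _)).ne'
    rw [hsupp]
    exact isOpen_univ.measure_pos volume ⟨0, trivial⟩
  set M : ℝ := ∫ z, g z with hMdef
  have hM : 0 < M := by
    rw [hMdef]
    rw [integral_pos_iff_support_of_nonneg (fun y => (hg_pos y).le) hg_int]
    have hs : (Function.support fun y : EuclideanSpace ℝ (Fin d) => Real.exp (-α * f y))
        = Set.univ := Set.eq_univ_of_forall fun y => (hg_pos y).ne'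
    rw [hs]
    exact isOpen_univ.measure_pos volume ⟨0, trivial⟩
  have hHC_eq : ∀ z, hHC T β lam f t z = F z / M := by
    intro z
    rw [hHC]
    have : ∀ y : EuclideanSpace ℝ (Fin d), heatK β (T - t) (z - y) * gibbsDen T β lam f y
        = (heatK β (T - t) (z - y) * g y) * M⁻¹ := by
      intro y
      rw [gibbsDen, ← hα, hgdef, hMdef]
      ring
    rw [funext this, integral_mul_const, div_eq_mul_inv, hFdef]
  -- differentiation under the integral sign
  have hF'int : Integrable (fun y => g y • K' (x - y)) := by
    apply Integrable.mono' (hg_int.const_mul Kb)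
    · exact (hg_cont.smul (hK'_cont.comp (continuous_const.sub continuous_id))).aestronglyMeasurable
    · filter_upwards with y
      rw [norm_smul (g y) (K' (x - y)), Real.norm_eq_abs, abs_of_pos (hg_pos y)]
      calc g y * ‖K' (x - y)‖ ≤ g y * Kb :=
            mul_le_mul_of_nonneg_left (hK'_le _) (hg_pos y).le
        _ = Kb * g y := mul_comm _ _
  have hFd : HasFDerivAt F (∫ y, g y • K' (x - y)) x := by
    rw [hFdef]
    apply hasFDerivAt_integral_of_dominated_of_fderiv_le
      (F' := fun x' y => g y • K' (x' - y)) (bound := fun y => Kb * g y) (s := Set.univ) Filter.univ_mem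
    · exact Eventually.of_forall fun x' => (hI1 x').aestronglyMeasurable
    · exact hI1 x
    · exact hF'int.aestronglyMeasurable
    · filter_upwards with y x' _
      rw [norm_smul (g y) (K' (x' - y)), Real.norm_eq_abs, abs_of_pos (hg_pos y)]
      calc g y * ‖K' (x' - y)‖ ≤ g y * Kb :=
            mul_le_mul_of_nonneg_left (hK'_le _) (hg_pos y).le
        _ = Kb * g y := mul_comm _ _
    · exact hg_int.const_mul Kb
    · filter_upwards with y x' _
      have h1 : HasFDerivAt (fun w : EuclideanSpace ℝ (Fin d) => heatK β (T - t) (w - y))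
          (K' (x' - y)) x' := by
        have := (hKd (x' - y)).comp x' ((hasFDerivAt_id x').sub_const y)
        exact this
      have h2 := h1.mul_const (g y)
      convert h2 using 1
  -- derivative of g
  have hg_fd : ∀ y, HasFDerivAt g ((-α * g y) • fderiv ℝ f y) y := by
    intro y
    have h1 : HasFDerivAt (fun w => -α * f w) ((-α) • fderiv ℝ f y) y :=
      (hf_diff y).hasFDerivAt.const_mul (-α)
    have h2 := h1.exp
    refine h2.congr_fderiv (Eq.symm ?_)
    rw [smul_smul]
    congr 1
    simp [hgdef]
    ring
  have hgdiff : Differentiable ℝ g := fun y => (hg_fd y).differentiableAt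
  have hg_fderiv : ∀ y, fderiv ℝ g y = (-α * g y) • fderiv ℝ f y := fun y => (hg_fd y).fderiv
  -- derivative of y ↦ heatK (x - y)
  have hφd : ∀ y, HasFDerivAt (fun w : EuclideanSpace ℝ (Fin d) => heatK β (T - t) (x - w))
      (-(K' (x - y))) y := by
    intro y
    have h0 : HasFDerivAt (fun w : EuclideanSpace ℝ (Fin d) => x - w)
        ((0 : EuclideanSpace ℝ (Fin d) →L[ℝ] EuclideanSpace ℝ (Fin d)) - ContinuousLinearMap.id ℝ _)
        y := (hasFDerivAt_const x y).sub (hasFDerivAt_id y)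
    have h1 := (hKd (x - y)).comp y h0
    refine h1.congr_fderiv (Eq.symm ?_)
    ext v
    simp
  have hφdiff : Differentiable ℝ (fun w : EuclideanSpace ℝ (Fin d) => heatK β (T - t) (x - w)) :=
    fun y => (hφd y).differentiableAt
  have hφ_fderiv : ∀ y, fderiv ℝ (fun w : EuclideanSpace ℝ (Fin d) => heatK β (T - t) (x - w)) y
      = -(K' (x - y)) := fun y => (hφd y).fderiv
  have hnorm_grad : ∀ y, ‖fderiv ℝ f y‖ = ‖gradient f y‖ := by
    intro y
    rw [show gradient f y = (InnerProductSpace.toDual ℝ _).symm (fderiv ℝ f y) from rfl,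
      LinearIsometryEquiv.norm_map]
  -- integration by parts
  have key : ∀ v : EuclideanSpace ℝ (Fin d),
      ∫ y, g y * (K' (x - y)) v
        = -α * ∫ y, heatK β (T - t) (x - y) * g y * fderiv ℝ f y v := by
    intro v
    have e1 : (fun y : EuclideanSpace ℝ (Fin d) =>
        fderiv ℝ (fun w => heatK β (T - t) (x - w)) y v * g y)
        = fun y => -((K' (x - y)) v * g y) := by
      funext y; rw [hφ_fderiv y]; simp
    have e2 : (fun y : EuclideanSpace ℝ (Fin d) =>
        heatK β (T - t) (x - y) * fderiv ℝ g y v)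
        = fun y => -α * (heatK β (T - t) (x - y) * g y * fderiv ℝ f y v) := by
      funext y; rw [hg_fderiv y]
      simp only [ContinuousLinearMap.coe_smul', Pi.smul_apply, smul_eq_mul]
      ring
    have hA : Integrable (fun y => (K' (x - y)) v * g y) := by
      apply hg_int.bdd_mul (c := Kb * ‖v‖)
      · exact ((ContinuousLinearMap.apply ℝ ℝ v).continuous.comp
          (hK'_cont.comp (continuous_const.sub continuous_id))).aestronglyMeasurable
      · refine ae_of_all _ fun y => ?_
        show ‖(K' (x - y)) v‖ ≤ Kb * ‖v‖
        calc ‖(K' (x - y)) v‖ ≤ ‖K' (x - y)‖ * ‖v‖ := (K' (x - y)).le_opNorm v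
          _ ≤ Kb * ‖v‖ := mul_le_mul_of_nonneg_right (hK'_le _) (norm_nonneg v)
    have hB0 : Integrable (fun y => heatK β (T - t) (x - y) * g y * fderiv ℝ f y v) := by
      apply Integrable.mono' (hgrad_int.const_mul (c * ‖v‖))
      · apply Continuous.aestronglyMeasurable
        exact ((hK_cont.comp (continuous_const.sub continuous_id)).mul hg_cont).mul
          ((ContinuousLinearMap.apply ℝ ℝ v).continuous.comp hf'_cont)
      · filter_upwards with y
        have h1 : |fderiv ℝ f y v| ≤ ‖gradient f y‖ * ‖v‖ := by
          rw [← hnorm_grad]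
          exact (fderiv ℝ f y).le_opNorm v
        rw [Real.norm_eq_abs, abs_mul, abs_mul, abs_of_pos (hK_pos _), abs_of_pos (hg_pos _)]
        calc heatK β (T - t) (x - y) * g y * |fderiv ℝ f y v|
            ≤ c * g y * (‖gradient f y‖ * ‖v‖) := by
              apply mul_le_mul (mul_le_mul_of_nonneg_right (hK_le _) (hg_pos y).le) h1
                (abs_nonneg _) (by positivity)
          _ = c * ‖v‖ * (‖gradient f y‖ * Real.exp (-α * f y)) := by
              rw [hgdef]; ring
    have hib := integral_mul_fderiv_eq_neg_fderiv_mul_of_integrable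
      (μ := volume) (v := v)
      (by rw [e1]; exact hA.neg) (by rw [e2]; exact hB0.const_mul (-α)) (hI1 x) (fun y _ => hφdiff y) (fun y _ => hgdiff y)
    rw [e1, e2, integral_const_mul, integral_neg, neg_neg] at hib
    calc ∫ y, g y * (K' (x - y)) v
        = ∫ y, (K' (x - y)) v * g y :=
          integral_congr_ae (.of_forall fun y => mul_comm _ _)
      _ = -α * ∫ y, heatK β (T - t) (x - y) * g y * fderiv ℝ f y v := hib.symm
  -- the Fréchet derivative of log ∘ hHC
  set F' : EuclideanSpace ℝ (Fin d) →L[ℝ] ℝ := ∫ y, g y • K' (x - y) with hF'def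
  have hHCfun : (fun z => Real.log (hHC T β lam f t z)) = fun z => Real.log (M⁻¹ * F z) := by
    funext z; rw [hHC_eq z, div_eq_inv_mul]
  have hlog : HasFDerivAt (fun z => Real.log (hHC T β lam f t z)) ((F x)⁻¹ • F') x := by
    rw [hHCfun]
    have h1 : HasFDerivAt (fun z => M⁻¹ * F z) (M⁻¹ • F') x := hFd.const_mul M⁻¹
    have h2 := h1.log (ne_of_gt (mul_pos (inv_pos.2 hM) (hFpos x)))
    refine h2.congr_fderiv (Eq.symm ?_)
    rw [smul_smul]
    congr 1
    field_simp
  have hgrad : gradient (fun z => Real.log (hHC T β lam f t z)) x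
      = (InnerProductSpace.toDual ℝ _).symm ((F x)⁻¹ • F') := hlog.hasGradientAt.gradient
  -- rewriting etaHC
  have hη : ∀ y, etaHC T β lam f t x y = (F x)⁻¹ * (heatK β (T - t) (x - y) * g y) := by
    intro y
    have h1 : etaHC T β lam f t x y
        = heatK β (T - t) (x - y) * (g y / M) / (F x / M) := by
      simp only [etaHC, gibbsDen, hHC_eq x, hgdef, hMdef, hα]
    rw [h1]
    field_simp
  -- integrability of the eta-weighted gradient
  have hgrad_cont : Continuous (gradient f) := by
    have h : gradient f = fun y => (InnerProductSpace.toDual ℝ (EuclideanSpace ℝ (Fin d))).symm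
        (fderiv ℝ f y) := rfl
    rw [h]
    exact (InnerProductSpace.toDual ℝ _).symm.continuous.comp hf'_cont
  have hJ : Integrable (fun y => (heatK β (T - t) (x - y) * g y) • gradient f y) := by
    apply Integrable.mono' (hgrad_int.const_mul c)
    · exact (((hK_cont.comp (continuous_const.sub continuous_id)).mul hg_cont).smul
        hgrad_cont).aestronglyMeasurable
    · filter_upwards with y
      rw [norm_smul (heatK β (T - t) (x - y) * g y) (gradient f y), Real.norm_eq_abs, abs_mul,
        abs_of_pos (hK_pos _), abs_of_pos (hg_pos _)]
      calc heatK β (T - t) (x - y) * g y * ‖gradient f y‖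
          ≤ c * g y * ‖gradient f y‖ := by
            apply mul_le_mul_of_nonneg_right
              (mul_le_mul_of_nonneg_right (hK_le _) (hg_pos y).le) (norm_nonneg _)
        _ = c * (‖gradient f y‖ * Real.exp (-α * f y)) := by rw [hgdef]; ring
  have hηint : Integrable (fun y => etaHC T β lam f t x y • gradient f y) := by
    have h : (fun y => etaHC T β lam f t x y • gradient f y)
        = fun y => (F x)⁻¹ • ((heatK β (T - t) (x - y) * g y) • gradient f y) := by
      funext y; rw [hη y, mul_smul]
    rw [h]
    exact hJ.smul ((F x)⁻¹)
  -- final computation via inner products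
  have hconst : 2 * β * α = T / lam := by
    rw [hα]; field_simp
  apply ext_inner_left ℝ
  intro v
  rw [uHC, hgrad, real_inner_smul_right, real_inner_comm,
    InnerProductSpace.toDual_symm_apply]
  rw [real_inner_smul_right]
  rw [show ⟪v, ∫ y, etaHC T β lam f t x y • gradient f y⟫
      = ∫ y, ⟪v, etaHC T β lam f t x y • gradient f y⟫ from
    ((innerSL ℝ v).integral_comp_comm hηint).symm]
  have hrhs : ∫ y, ⟪v, etaHC T β lam f t x y • gradient f y⟫
      = (F x)⁻¹ * ∫ y, heatK β (T - t) (x - y) * g y * fderiv ℝ f y v := by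
    rw [← integral_const_mul]
    apply integral_congr_ae
    filter_upwards with y
    rw [real_inner_smul_right, real_inner_comm, hη y]
    rw [show ⟪gradient f y, v⟫ = fderiv ℝ f y v from InnerProductSpace.toDual_symm_apply]
    ring
  rw [hrhs]
  have hlhs : ((F x)⁻¹ • F') v = (F x)⁻¹ * ((-α) * ∫ y,
      heatK β (T - t) (x - y) * g y * fderiv ℝ f y v) := by
    rw [ContinuousLinearMap.smul_apply, smul_eq_mul]
    congr 1
    rw [hF'def, ContinuousLinearMap.integral_apply hF'int v]
    rw [show (fun y => (g y • K' (x - y)) v) = fun y => g y * (K' (x - y)) v from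
      funext fun y => by simp]
    rw [key v]
  rw [hlhs]
  set I : ℝ := ∫ y, heatK β (T - t) (x - y) * g y * fderiv ℝ f y v with hIdef
  linear_combination (-(F x)⁻¹ * I) * hconst
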